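/- (Convergence of the inertial PC-algorithm I with outer-perturbation form, iPC I-1.) Let ν ∈ (0,1), γ ∈ (0,2), and let {α_k^{(1)}}, {α_k^{(2)}} ⊆ [0,1]. Let x^{-1}, x^0 ∈ H and let {x^k}, {y^k}, {β_k} satisfy, for every k ≥ 0: β_k > 0 with inf_k β_k > 0; y^k = P_C(x^k − β_k F(x^k)) + α_k^{(1)}(x^k − x^{k−1}); β_k‖F(x^k) − F(y^k − α_k^{(1)}(x^k − x^{k−1}))‖ ≤ ν‖x^k − y^k + α_k^{(1)}(x^k − x^{k−1})‖; d^k := (x^k − y^k + α_k^{(1)}(x^k − x^{k−1})) − β_k(F(x^k) − F(y^k − α_k^{(1)}(x^k − x^{k−1}))) ≠ 0; ρ_k := ⟨x^k − y^k + α_k^{(1)}(x^k − x^{k−1}), d^k⟩/‖d^k‖²; x^{k+1} = x^k − γ ρ_k d^k + α_k^{(2)}(x^k − x^{k−1}). If Σ_{k=0}^∞ α_k^{(i)}‖x^k − x^{k−1}‖ < +∞ for i = 1, 2, then {x^k} converges weakly (i.e., ⟨x^k, u⟩ → ⟨x̂, u⟩ for every u ∈ H) to some point x̂ ∈ SOL(C,F).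 -/

import Mathlib

open Filter RealInnerProductSpace

section Aux
lemma aux_quasiFejer (a s : ℕ → ℝ) (ha : ∀ k, 0 ≤ a k) (hs : ∀ k, 0 ≤ s k)
    (hsum : Summable s) (hrec : ∀ k, a (k+1) ≤ a k + s k) :
    ∃ l, Tendsto a atTop (nhds l) := by
  set T : ℕ → ℝ := fun k => ∑' j, s (j + k) with hT
  have hTsum : ∀ k, Summable (fun j => s (j + k)) := fun k => (summable_nat_add_iff k).2 hsum
  have hTrec : ∀ k, T k = s k + T (k + 1) := by
    intro k
    have := Summable.tsum_eq_zero_add (hTsum k)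
    simpa [hT, add_assoc, add_comm 1 k] using this
  have hTnn : ∀ k, 0 ≤ T k := fun k => tsum_nonneg (fun j => hs _)
  have hanti : Antitone (fun k => a k + T k) := by
    apply antitone_nat_of_succ_le
    intro k
    have := hrec k
    have := hTrec k
    nlinarith [hrec k, hTrec k]
  have hbdd : BddBelow (Set.range (fun k => a k + T k)) := by
    refine ⟨0, ?_⟩
    rintro r ⟨k, rfl⟩
    exact add_nonneg (ha k) (hTnn k)
  have hconv : Tendsto (fun k => a k + T k) atTop (nhds (⨅ k, a k + T k)) :=
    tendsto_atTop_ciInf hanti hbdd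
  have hT0 : Tendsto T atTop (nhds 0) := tendsto_sum_nat_add s
  refine ⟨(⨅ k, a k + T k) - 0, ?_⟩
  have := hconv.sub hT0
  simpa using this

lemma aux_summable_of_diff (a c t : ℕ → ℝ) (hc : ∀ k, 0 ≤ c k) (ht : Summable t)
    (ht0 : ∀ k, 0 ≤ t k)
    (hrec : ∀ k, c k ≤ a k ^ 2 - a (k+1) ^ 2 + t k) : Summable c := by
  apply summable_of_sum_range_le hc (c := a 0 ^ 2 + ∑' k, t k)
  intro n
  have h1 : ∑ i ∈ Finset.range n, c i ≤
      ∑ i ∈ Finset.range n, (a i ^ 2 - a (i+1) ^ 2 + t i) :=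
    Finset.sum_le_sum (fun i _ => hrec i)
  have h2 : ∑ i ∈ Finset.range n, (a i ^ 2 - a (i+1) ^ 2 + t i)
      = (a 0 ^ 2 - a n ^ 2) + ∑ i ∈ Finset.range n, t i := by
    rw [Finset.sum_add_distrib, Finset.sum_range_sub' (fun k => a k ^ 2) n]
  have h3 : ∑ i ∈ Finset.range n, t i ≤ ∑' k, t k := Summable.sum_le_tsum _ (fun i _ => ht0 i) ht
  nlinarith [sq_nonneg (a n)]

lemma aux_weak_ultra {H : Type*} [NormedAddCommGroup H] [InnerProductSpace ℝ H]
    [CompleteSpace H] (x : ℕ → H) (R : ℝ) (hR : ∀ k, ‖x k‖ ≤ R) (V : Ultrafilter ℕ) :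
    ∃ xhat : H, ∀ u : H, Tendsto (fun k => ⟪x k, u⟫) V (nhds ⟪xhat, u⟫) := by
  have hR0 : 0 ≤ R := le_trans (norm_nonneg _) (hR 0)
  have key : ∀ u : H, ∃ a : ℝ, Tendsto (fun k => ⟪x k, u⟫) V (nhds a) := by
    intro u
    have hmem : ∀ k, ⟪x k, u⟫ ∈ Set.Icc (-(R * ‖u‖)) (R * ‖u‖) := by
      intro k
      have h := abs_real_inner_le_norm (x k) u
      have : |⟪x k, u⟫| ≤ R * ‖u‖ :=
        h.trans (mul_le_mul_of_nonneg_right (hR k) (norm_nonneg u))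
      exact abs_le.1 this
    obtain ⟨a, -, ha⟩ := (isCompact_Icc (a := -(R * ‖u‖)) (b := R * ‖u‖)).ultrafilter_le_nhds
      (V.map (fun k => ⟪x k, u⟫)) (by
        rw [Ultrafilter.coe_map, Filter.le_principal_iff]
        exact Filter.mem_map.2 (Filter.univ_mem' (fun k => hmem k)))
    exact ⟨a, ha⟩
  choose Lf hLf using key
  have hadd : ∀ u v : H, Lf (u + v) = Lf u + Lf v := by
    intro u v
    have h1 : Tendsto (fun k => ⟪x k, u + v⟫) V (nhds (Lf u + Lf v)) := by
      have := (hLf u).add (hLf v)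
      simpa [inner_add_right] using this
    exact tendsto_nhds_unique (hLf (u + v)) h1
  have hsmul : ∀ (c : ℝ) (u : H), Lf (c • u) = c * Lf u := by
    intro c u
    have h1 : Tendsto (fun k => ⟪x k, c • u⟫) V (nhds (c * Lf u)) := by
      have := (hLf u).const_mul c
      simpa [real_inner_smul_right] using this
    exact tendsto_nhds_unique (hLf (c • u)) h1
  have hbdd : ∀ u : H, ‖Lf u‖ ≤ R * ‖u‖ := by
    intro u
    have : Tendsto (fun k => |⟪x k, u⟫|) V (nhds (|Lf u|)) := (hLf u).abs
    have h2 : ∀ k, |⟪x k, u⟫| ≤ R * ‖u‖ := fun k =>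
      (abs_real_inner_le_norm (x k) u).trans
        (mul_le_mul_of_nonneg_right (hR k) (norm_nonneg u))
    have := le_of_tendsto this (Filter.Eventually.of_forall h2)
    simpa [Real.norm_eq_abs] using this
  let Lm : H →ₗ[ℝ] ℝ := { toFun := Lf, map_add' := hadd, map_smul' := hsmul }
  let Lc : H →L[ℝ] ℝ := Lm.mkContinuous R hbdd
  refine ⟨(InnerProductSpace.toDual ℝ H).symm Lc, fun u => ?_⟩
  have : (⟪(InnerProductSpace.toDual ℝ H).symm Lc, u⟫ : ℝ) = Lc u :=
    InnerProductSpace.toDual_symm_apply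
  rw [this]
  exact hLf u

end Aux

set_option maxHeartbeats 4000000 in
/-- `xm k` plays the role of `x^{k-1}` (with `xm 0` the arbitrary starting point `x^{-1}`). -/
theorem stmt_14 {H : Type*} [NormedAddCommGroup H] [InnerProductSpace ℝ H]
    [CompleteSpace H]
    (C : Set H) (hCne : C.Nonempty) (hCcl : IsClosed C) (hCcv : Convex ℝ C)
    (P : H → H) (hPmem : ∀ u : H, P u ∈ C)
    (hPchar : ∀ u : H, ∀ c ∈ C, ⟪u - P u, c - P u⟫ ≤ 0)
    (F : H → H) (hmono : ∀ u v : H, 0 ≤ ⟪F u - F v, u - v⟫)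
    (L : ℝ) (hL : 0 < L) (hLip : ∀ u v : H, ‖F u - F v‖ ≤ L * ‖u - v‖)
    (hSOL : ∃ p ∈ C, ∀ z ∈ C, 0 ≤ ⟪F p, z - p⟫)
    (ν γ : ℝ) (hν : ν ∈ Set.Ioo (0 : ℝ) 1) (hγ : γ ∈ Set.Ioo (0 : ℝ) 2)
    (α1 α2 : ℕ → ℝ) (hα1 : ∀ k, α1 k ∈ Set.Icc (0 : ℝ) 1)
    (hα2 : ∀ k, α2 k ∈ Set.Icc (0 : ℝ) 1)
    (x xm y : ℕ → H) (β : ℕ → ℝ) (d : ℕ → H) (ρ : ℕ → ℝ)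
    (hxm : ∀ k, xm (k + 1) = x k)
    (hβpos : ∀ k, 0 < β k) (hβinf : ∃ b > (0 : ℝ), ∀ k, b ≤ β k)
    (hy : ∀ k, y k = P (x k - β k • F (x k)) + α1 k • (x k - xm k))
    (hstep : ∀ k, β k * ‖F (x k) - F (y k - α1 k • (x k - xm k))‖ ≤
        ν * ‖x k - y k + α1 k • (x k - xm k)‖)
    (hd : ∀ k, d k = (x k - y k + α1 k • (x k - xm k)) -
        β k • (F (x k) - F (y k - α1 k • (x k - xm k))))
    (hdne : ∀ k, d k ≠ 0)
    (hρ : ∀ k, ρ k = ⟪x k - y k + α1 k • (x k - xm k), d k⟫ / ‖d k‖ ^ 2)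
    (hx : ∀ k, x (k + 1) = x k - (γ * ρ k) • d k + α2 k • (x k - xm k))
    (hsum1 : Summable (fun k => α1 k * ‖x k - xm k‖))
    (hsum2 : Summable (fun k => α2 k * ‖x k - xm k‖)) :
    ∃ xhat, (xhat ∈ C ∧ ∀ z ∈ C, 0 ≤ ⟪F xhat, z - xhat⟫) ∧
      ∀ u : H, Filter.Tendsto (fun k => ⟪x k, u⟫) Filter.atTop (nhds ⟪xhat, u⟫) := by
  obtain ⟨hν0, hν1⟩ := hν
  obtain ⟨hγ0, hγ2⟩ := hγ
  obtain ⟨b, hb0, hb⟩ := hβinf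
  obtain ⟨p0, hp0C, hp0⟩ := hSOL
  obtain ⟨w, hwdef⟩ : ∃ w : ℕ → H, w = fun k => P (x k - β k • F (x k)) := ⟨_, rfl⟩
  obtain ⟨s, hsdef⟩ : ∃ s : ℕ → ℝ, s = fun k => α2 k * ‖x k - xm k‖ := ⟨_, rfl⟩
  have hsum_s' : Summable s := by rw [hsdef]; exact hsum2
  have hs0 : ∀ k, 0 ≤ s k := by
    intro k; rw [hsdef]; exact mul_nonneg (hα2 k).1 (norm_nonneg _)
  -- rewrites in terms of w
  have hyw : ∀ k, y k - α1 k • (x k - xm k) = w k := by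
    intro k; rw [hy k, hwdef]; abel
  have hxyw : ∀ k, x k - y k + α1 k • (x k - xm k) = x k - w k := by
    intro k; rw [hy k, hwdef]; abel
  have hstep' : ∀ k, β k * ‖F (x k) - F (w k)‖ ≤ ν * ‖x k - w k‖ := by
    intro k; have := hstep k; rwa [hyw, hxyw] at this
  have hd' : ∀ k, d k = (x k - w k) - β k • (F (x k) - F (w k)) := by
    intro k; rw [hd k, hyw, hxyw]
  have hρ' : ∀ k, ρ k = ⟪x k - w k, d k⟫ / ‖d k‖ ^ 2 := by
    intro k; rw [hρ k, hxyw]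
  have hdnorm : ∀ k, 0 < ‖d k‖ := fun k => norm_pos_iff.2 (hdne k)
  have hxw_pos : ∀ k, 0 < ‖x k - w k‖ := by
    intro k
    rcases eq_or_ne (x k) (w k) with h | h
    · exfalso
      apply hdne k
      rw [hd' k, h]
      simp
    · exact norm_pos_iff.2 (sub_ne_zero.2 h)
  have hA5 : ∀ k, (1 - ν) * ‖x k - w k‖ ^ 2 ≤ ⟪x k - w k, d k⟫ := by
    intro k
    rw [hd' k, inner_sub_right, real_inner_self_eq_norm_sq]
    have h1 : ⟪x k - w k, β k • (F (x k) - F (w k))⟫ ≤ ν * ‖x k - w k‖ ^ 2 := by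
      rw [real_inner_smul_right]
      calc β k * ⟪x k - w k, F (x k) - F (w k)⟫
          ≤ β k * (‖x k - w k‖ * ‖F (x k) - F (w k)‖) :=
            mul_le_mul_of_nonneg_left (real_inner_le_norm _ _) (hβpos k).le
        _ = ‖x k - w k‖ * (β k * ‖F (x k) - F (w k)‖) := by ring
        _ ≤ ‖x k - w k‖ * (ν * ‖x k - w k‖) :=
            mul_le_mul_of_nonneg_left (hstep' k) (norm_nonneg _)
        _ = ν * ‖x k - w k‖ ^ 2 := by ring
    linarith
  have hA6 : ∀ k, ‖d k‖ ≤ (1 + ν) * ‖x k - w k‖ := by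
    intro k
    rw [hd' k]
    calc ‖x k - w k - β k • (F (x k) - F (w k))‖
        ≤ ‖x k - w k‖ + ‖β k • (F (x k) - F (w k))‖ := norm_sub_le _ _
      _ = ‖x k - w k‖ + β k * ‖F (x k) - F (w k)‖ := by
          rw [norm_smul, Real.norm_eq_abs, abs_of_pos (hβpos k)]
      _ ≤ ‖x k - w k‖ + ν * ‖x k - w k‖ := by linarith [hstep' k]
      _ = (1 + ν) * ‖x k - w k‖ := by ring
  have hρd : ∀ k, ρ k * ‖d k‖ ^ 2 = ⟪x k - w k, d k⟫ := by
    intro k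
    rw [hρ' k]
    exact div_mul_cancel₀ _ (pow_ne_zero 2 (norm_ne_zero_iff.2 (hdne k)))
  have hρnn : ∀ k, 0 ≤ ρ k := by
    intro k
    rw [hρ' k]
    exact div_nonneg (le_trans (by nlinarith [sq_nonneg ‖x k - w k‖]) (hA5 k)) (sq_nonneg _)
  have hA8 : ∀ k, ((1 - ν) / (1 + ν)) ^ 2 * ‖x k - w k‖ ^ 2 ≤ ρ k ^ 2 * ‖d k‖ ^ 2 := by
    intro k
    have h5 := hA5 k
    have h6 := hA6 k
    have hdk := hdnorm k
    have hxwk := hxw_pos k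
    have hrew : ρ k ^ 2 * ‖d k‖ ^ 2 = ⟪x k - w k, d k⟫ ^ 2 / ‖d k‖ ^ 2 := by
      rw [hρ' k]
      field_simp
    rw [hrew, le_div_iff₀ (by positivity)]
    have h6' : ‖d k‖ ^ 2 ≤ (1 + ν) ^ 2 * ‖x k - w k‖ ^ 2 := by
      nlinarith [norm_nonneg (d k), norm_nonneg (x k - w k)]
    have h5' : ((1 - ν) * ‖x k - w k‖ ^ 2) ^ 2 ≤ ⟪x k - w k, d k⟫ ^ 2 :=
      pow_le_pow_left₀ (mul_nonneg (by linarith) (sq_nonneg _)) h5 2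
    have hfact : ((1 - ν) / (1 + ν)) ^ 2 * ‖x k - w k‖ ^ 2 * ((1 + ν) ^ 2 * ‖x k - w k‖ ^ 2)
        = ((1 - ν) * ‖x k - w k‖ ^ 2) ^ 2 := by
      field_simp
    calc ((1 - ν) / (1 + ν)) ^ 2 * ‖x k - w k‖ ^ 2 * ‖d k‖ ^ 2
        ≤ ((1 - ν) / (1 + ν)) ^ 2 * ‖x k - w k‖ ^ 2 * ((1 + ν) ^ 2 * ‖x k - w k‖ ^ 2) :=
          mul_le_mul_of_nonneg_left h6' (by positivity)
      _ = ((1 - ν) * ‖x k - w k‖ ^ 2) ^ 2 := hfact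
      _ ≤ ⟪x k - w k, d k⟫ ^ 2 := h5'
  -- key one-step inequalities, valid for any solution p
  have hkey : ∀ p, p ∈ C → (∀ z ∈ C, 0 ≤ ⟪F p, z - p⟫) → ∀ k,
      ‖x (k + 1) - p‖ ≤ ‖x k - p‖ + s k ∧
      ‖x (k + 1) - p‖ ^ 2 ≤ ‖x k - p‖ ^ 2 - γ * (2 - γ) * (ρ k ^ 2 * ‖d k‖ ^ 2)
        + s k * (2 * ‖x k - p‖ + s k) := by
    intro p hpC hpS k
    set v : H := α2 k • (x k - xm k) with hv
    set z : H := x k - (γ * ρ k) • d k with hz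
    have hvz : x (k + 1) = z + v := hx k
    have hvnorm : ‖v‖ = s k := by
      rw [hv, hsdef, norm_smul, Real.norm_eq_abs, abs_of_nonneg (hα2 k).1]
    have hPw : P (x k - β k • F (x k)) = w k := by rw [hwdef]
    have hproj' : β k * ⟪w k - p, F (x k)⟫ ≤ ⟪w k - p, x k - w k⟫ := by
      have hproj := hPchar (x k - β k • F (x k)) p hpC
      rw [hPw, sub_right_comm] at hproj
      rw [inner_sub_left, real_inner_smul_left, ← neg_sub (w k) p, inner_neg_right,
        inner_neg_right] at hproj
      rw [real_inner_comm (w k - p) (x k - w k), real_inner_comm (w k - p) (F (x k))] at hproj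
      linarith
    have hmono1 : ⟪w k - p, F p⟫ ≤ ⟪w k - p, F (w k)⟫ := by
      have h := hmono (w k) p
      rw [inner_sub_left, real_inner_comm (w k - p) (F (w k)),
        real_inner_comm (w k - p) (F p)] at h
      linarith
    have hwC : w k ∈ C := by rw [hwdef]; exact hPmem _
    have hsol1 : 0 ≤ ⟪w k - p, F p⟫ := by
      have h := hpS (w k) hwC
      rwa [real_inner_comm] at h
    have hB1 : 0 ≤ ⟪w k - p, d k⟫ := by
      have e : ⟪w k - p, d k⟫ = ⟪w k - p, x k - w k⟫
          - β k * (⟪w k - p, F (x k)⟫ - ⟪w k - p, F (w k)⟫) := by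
        rw [hd' k, inner_sub_right, real_inner_smul_right,
          inner_sub_right (𝕜 := ℝ) (w k - p) (F (x k)) (F (w k))]
      rw [e]
      have h3 := mul_le_mul_of_nonneg_left hmono1 (hβpos k).le
      have h4 := mul_nonneg (hβpos k).le hsol1
      linarith
    have hxpd : ρ k * ‖d k‖ ^ 2 ≤ ⟪x k - p, d k⟫ := by
      have hsplit : x k - p = (x k - w k) + (w k - p) := by abel
      rw [hsplit, inner_add_left]
      linarith [hρd k, hB1]
    have hγρ : 0 ≤ γ * ρ k := mul_nonneg hγ0.le (hρnn k)
    have hznorm : ‖z - p‖ ^ 2 ≤ ‖x k - p‖ ^ 2 - γ * (2 - γ) * (ρ k ^ 2 * ‖d k‖ ^ 2) := by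
      have hzp : z - p = (x k - p) - (γ * ρ k) • d k := by rw [hz]; abel
      rw [hzp, norm_sub_sq_real, real_inner_smul_right, norm_smul, Real.norm_eq_abs,
        abs_of_nonneg hγρ, mul_pow]
      nlinarith [mul_le_mul_of_nonneg_left hxpd hγρ]
    have hDnn : 0 ≤ γ * (2 - γ) * (ρ k ^ 2 * ‖d k‖ ^ 2) :=
      mul_nonneg (mul_nonneg hγ0.le (by linarith)) (by positivity)
    have hzle : ‖z - p‖ ≤ ‖x k - p‖ := by
      have h0 : ‖z - p‖ ^ 2 ≤ ‖x k - p‖ ^ 2 := by linarith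
      have h1 := Real.sqrt_le_sqrt h0
      rwa [Real.sqrt_sq (norm_nonneg _), Real.sqrt_sq (norm_nonneg _)] at h1
    have hn1 : ‖x (k + 1) - p‖ ≤ ‖z - p‖ + s k := by
      have hre : x (k + 1) - p = (z - p) + v := by rw [hvz]; abel
      calc ‖x (k + 1) - p‖ = ‖(z - p) + v‖ := by rw [hre]
        _ ≤ ‖z - p‖ + ‖v‖ := norm_add_le _ _
        _ = ‖z - p‖ + s k := by rw [hvnorm]
    constructor
    · exact hn1.trans (add_le_add_left hzle _)
    · have hsq := pow_le_pow_left₀ (norm_nonneg (x (k + 1) - p)) hn1 2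
      nlinarith [mul_le_mul_of_nonneg_left hzle (hs0 k), hs0 k, norm_nonneg (z - p)]
  -- boundedness
  obtain ⟨M, hMdef⟩ : ∃ M : ℝ, M = ‖x 0 - p0‖ + ∑' k, s k := ⟨_, rfl⟩
  have hsum_s : Summable s := hsum_s'
  have haM : ∀ k, ‖x k - p0‖ ≤ M := by
    have hpart : ∀ k, ‖x k - p0‖ ≤ ‖x 0 - p0‖ + ∑ i ∈ Finset.range k, s i := by
      intro k
      induction k with
      | zero => simp
      | succ n ih =>
        have h1 := (hkey p0 hp0C hp0 n).1
        rw [Finset.sum_range_succ]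
        linarith
    intro k
    have h2 := Summable.sum_le_tsum (Finset.range k) (fun i _ => hs0 i) hsum_s
    have := hpart k
    rw [hMdef]
    linarith
  have hM0 : 0 ≤ M := le_trans (norm_nonneg _) (haM 0)
  obtain ⟨R, hRdef⟩ : ∃ R : ℝ, R = M + ‖p0‖ := ⟨_, rfl⟩
  have hRx : ∀ k, ‖x k‖ ≤ R := by
    intro k
    calc ‖x k‖ = ‖(x k - p0) + p0‖ := by rw [sub_add_cancel]
      _ ≤ ‖x k - p0‖ + ‖p0‖ := norm_add_le _ _
      _ ≤ M + ‖p0‖ := add_le_add_left (haM k) _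
      _ = R := hRdef.symm
  -- summability of the decrease quantities and ‖x k - w k‖ → 0
  have hDsum : Summable (fun k => ρ k ^ 2 * ‖d k‖ ^ 2) := by
    have hS0 : ∀ k, s k ≤ ∑' j, s j := fun k => Summable.le_tsum hsum_s k (fun j _ => hs0 j)
    have hγ2' : (0 : ℝ) < 2 - γ := by linarith
    have htsumnn : (0 : ℝ) ≤ ∑' j, s j := tsum_nonneg hs0
    have hcnn : ∀ k, 0 ≤ γ * (2 - γ) * (ρ k ^ 2 * ‖d k‖ ^ 2) := by
      intro k
      have h0 : (0 : ℝ) ≤ ρ k ^ 2 * ‖d k‖ ^ 2 := by positivity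
      exact mul_nonneg (mul_nonneg hγ0.le hγ2'.le) h0
    have htnn : ∀ k, (0 : ℝ) ≤ s k * (2 * M + ∑' j, s j) := by
      intro k
      have := hs0 k
      nlinarith
    have htsummable : Summable (fun k => s k * (2 * M + ∑' j, s j)) :=
      hsum_s.mul_right _
    have hrec : ∀ k, γ * (2 - γ) * (ρ k ^ 2 * ‖d k‖ ^ 2) ≤
        ‖x k - p0‖ ^ 2 - ‖x (k + 1) - p0‖ ^ 2 + s k * (2 * M + ∑' j, s j) := by
      intro k
      have h2 := (hkey p0 hp0C hp0 k).2
      have h3 : s k * (2 * ‖x k - p0‖ + s k) ≤ s k * (2 * M + ∑' j, s j) := by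
        apply mul_le_mul_of_nonneg_left _ (hs0 k)
        have := haM k
        have := hS0 k
        linarith
      linarith
    have hc : Summable (fun k => γ * (2 - γ) * (ρ k ^ 2 * ‖d k‖ ^ 2)) :=
      aux_summable_of_diff (fun k => ‖x k - p0‖) _ _ hcnn htsummable htnn hrec
    have hne : γ * (2 - γ) ≠ 0 := by
      have h2 : (0 : ℝ) < 2 - γ := by linarith
      positivity
    have := hc.mul_left (γ * (2 - γ))⁻¹
    refine this.congr (fun k => ?_)
    exact inv_mul_cancel_left₀ hne _
  have hxw0 : Tendsto (fun k => ‖x k - w k‖) atTop (nhds 0) := by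
    have hD0 : Tendsto (fun k => ρ k ^ 2 * ‖d k‖ ^ 2) atTop (nhds 0) :=
      hDsum.tendsto_atTop_zero
    have hc0 : (0 : ℝ) < ((1 - ν) / (1 + ν)) ^ 2 := by
      have h1 : (0 : ℝ) < 1 - ν := by linarith
      have h2 : (0 : ℝ) < 1 + ν := by linarith
      positivity
    have hsq0 : Tendsto (fun k => ‖x k - w k‖ ^ 2) atTop (nhds 0) := by
      apply squeeze_zero (fun k => sq_nonneg _) (g := fun k =>
        (((1 - ν) / (1 + ν)) ^ 2)⁻¹ * (ρ k ^ 2 * ‖d k‖ ^ 2))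
      · intro k
        rw [inv_mul_eq_div, le_div_iff₀ hc0, mul_comm]
        exact hA8 k
      · have := hD0.const_mul (((1 - ν) / (1 + ν)) ^ 2)⁻¹
        simpa using this
    have := hsq0.sqrt
    rw [Real.sqrt_zero] at this
    refine this.congr (fun k => ?_)
    exact Real.sqrt_sq (norm_nonneg _)
  -- existence of limits of ‖x k - p‖ for solutions p
  have hlim : ∀ p, p ∈ C → (∀ z ∈ C, 0 ≤ ⟪F p, z - p⟫) →
      ∃ l, Tendsto (fun k => ‖x k - p‖) atTop (nhds l) := by
    intro p hpC hpS
    exact aux_quasiFejer (fun k => ‖x k - p‖) s (fun k => norm_nonneg _) hs0 hsum_s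
      (fun k => (hkey p hpC hpS k).1)
  -- ultrafilter weak limits
  have hUlt : ∀ V : Ultrafilter ℕ, (V : Filter ℕ) ≤ atTop → ∃ xh : H,
      (xh ∈ C ∧ ∀ z ∈ C, 0 ≤ ⟪F xh, z - xh⟫) ∧
      ∀ u : H, Tendsto (fun k => ⟪x k, u⟫) V (nhds ⟪xh, u⟫) := by
    intro V hV
    have hwCt : ∀ k, w k ∈ C := by intro k; rw [hwdef]; exact hPmem _
    obtain ⟨xh, hxh⟩ := aux_weak_ultra x R hRx V
    have hxwu : ∀ u : H, Tendsto (fun k => ⟪x k - w k, u⟫) atTop (nhds 0) := by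
      intro u
      refine squeeze_zero_norm (a := fun k => ‖x k - w k‖ * ‖u‖) (fun k => ?_) ?_
      · rw [Real.norm_eq_abs]
        exact abs_real_inner_le_norm _ _
      · simpa using hxw0.mul_const ‖u‖
    have hwu : ∀ u : H, Tendsto (fun k => ⟪w k, u⟫) V (nhds ⟪xh, u⟫) := by
      intro u
      have h1 := (hxh u).sub ((hxwu u).mono_left hV)
      have h2 : (fun k => ⟪x k, u⟫ - ⟪x k - w k, u⟫) = fun k => ⟪w k, u⟫ := by
        funext k
        rw [inner_sub_left]
        ring
      rw [h2] at h1
      simpa using h1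
    have hxhC : xh ∈ C := by
      have hq : ∀ k, ⟪xh - P xh, w k - P xh⟫ ≤ 0 := fun k => hPchar xh (w k) (hwCt k)
      have h5 : ∀ k, ⟪xh - P xh, w k - P xh⟫
          = ⟪w k, xh - P xh⟫ - ⟪(P xh : H), xh - P xh⟫ := by
        intro k
        rw [inner_sub_right, real_inner_comm (xh - P xh) (w k),
          real_inner_comm (xh - P xh) (P xh)]
      have h2 : Tendsto (fun k => ⟪xh - P xh, w k - P xh⟫) V
          (nhds (⟪xh, xh - P xh⟫ - ⟪(P xh : H), xh - P xh⟫)) := by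
        have h3 := (hwu (xh - P xh)).sub
          (tendsto_const_nhds (x := ⟪(P xh : H), xh - P xh⟫) (f := (V : Filter ℕ)))
        exact h3.congr (fun k => (h5 k).symm)
      have h6 := le_of_tendsto h2 (Filter.Eventually.of_forall hq)
      have h7 : ⟪xh - P xh, xh - P xh⟫ ≤ 0 := by
        rw [inner_sub_left]
        linarith
      have h8 : xh - P xh = 0 := by
        have := real_inner_self_nonpos.1 h7
        exact this
      have h9 : xh = P xh := by
        rwa [sub_eq_zero] at h8
      rw [h9]
      exact hPmem _
    have hMinty : ∀ z ∈ C, 0 ≤ ⟪F z, z - xh⟫ := by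
      intro z hz
      have hlow : ∀ k, -((L + 1 / b) * ‖x k - w k‖ * (‖z‖ + R + ‖x k - w k‖))
          ≤ ⟪F z, z - w k⟫ := by
        intro k
        have hPw : P (x k - β k • F (x k)) = w k := by rw [hwdef]
        have hproj := hPchar (x k - β k • F (x k)) z hz
        rw [hPw, sub_right_comm, inner_sub_left, real_inner_smul_left] at hproj
        have hcs1 := abs_real_inner_le_norm (x k - w k) (z - w k)
        have hcs1' := (abs_le.1 hcs1).1
        have hFx : -(‖x k - w k‖ * ‖z - w k‖) ≤ β k * ⟪F (x k), z - w k⟫ := by linarith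
        have hFxb : -(‖x k - w k‖ * ‖z - w k‖ / b) ≤ ⟪F (x k), z - w k⟫ := by
          rcases le_or_gt 0 ⟪F (x k), z - w k⟫ with h | h
          · have h0 : 0 ≤ ‖x k - w k‖ * ‖z - w k‖ / b := by positivity
            linarith
          · have h1 : β k * ⟪F (x k), z - w k⟫ ≤ b * ⟪F (x k), z - w k⟫ :=
              mul_le_mul_of_nonpos_right (hb k) h.le
            rw [← neg_div, div_le_iff₀ hb0]
            have h2 := mul_comm b ⟪F (x k), z - w k⟫
            linarith
        have hmonoz := hmono z (w k)
        rw [inner_sub_left] at hmonoz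
        have hlipk : ‖F (x k) - F (w k)‖ ≤ L * ‖x k - w k‖ := hLip _ _
        have hcs2 := abs_real_inner_le_norm (F (x k) - F (w k)) (z - w k)
        have hcs2' := (abs_le.1 hcs2).2
        have hcs2'' : ⟪F (x k) - F (w k), z - w k⟫ ≤ L * ‖x k - w k‖ * ‖z - w k‖ := by
          have := mul_le_mul_of_nonneg_right hlipk (norm_nonneg (z - w k))
          linarith
        have hsplit : ⟪F (w k), z - w k⟫
            = ⟪F (x k), z - w k⟫ - ⟪F (x k) - F (w k), z - w k⟫ := by
          rw [inner_sub_left]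
          ring
        have hZ : ‖z - w k‖ ≤ ‖z‖ + R + ‖x k - w k‖ := by
          calc ‖z - w k‖ = ‖(z - x k) + (x k - w k)‖ := by abel_nf
            _ ≤ ‖z - x k‖ + ‖x k - w k‖ := norm_add_le _ _
            _ ≤ (‖z‖ + ‖x k‖) + ‖x k - w k‖ := by
                have := norm_sub_le z (x k)
                linarith
            _ ≤ ‖z‖ + R + ‖x k - w k‖ := by
                have := hRx k
                linarith
        have hXnn : (0 : ℝ) ≤ ‖x k - w k‖ := norm_nonneg _
        have hZnn : (0 : ℝ) ≤ ‖z - w k‖ := norm_nonneg _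
        have hXZ : ‖x k - w k‖ * ‖z - w k‖ ≤ ‖x k - w k‖ * (‖z‖ + R + ‖x k - w k‖) :=
          mul_le_mul_of_nonneg_left hZ hXnn
        have hdivb : ‖x k - w k‖ * ‖z - w k‖ / b
            ≤ ‖x k - w k‖ * (‖z‖ + R + ‖x k - w k‖) / b := by gcongr
        have hLXZ : L * ‖x k - w k‖ * ‖z - w k‖
            ≤ L * ‖x k - w k‖ * (‖z‖ + R + ‖x k - w k‖) := by
          rw [mul_assoc, mul_assoc]
          exact mul_le_mul_of_nonneg_left hXZ hL.le
        have hfz : ⟪F z, z - w k⟫ ≥ ⟪F (w k), z - w k⟫ := by linarith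
        have hexp : (L + 1 / b) * ‖x k - w k‖ * (‖z‖ + R + ‖x k - w k‖)
            = L * ‖x k - w k‖ * (‖z‖ + R + ‖x k - w k‖)
              + ‖x k - w k‖ * (‖z‖ + R + ‖x k - w k‖) / b := by
          field_simp
        rw [hexp]
        linarith
      have htend : Tendsto (fun k => ⟪F z, z - w k⟫) V (nhds ⟪F z, z - xh⟫) := by
        have h1 := (tendsto_const_nhds (x := ⟪F z, z⟫) (f := (V : Filter ℕ))).sub
          (hwu (F z))
        have h2 : (fun k => ⟪F z, z⟫ - ⟪w k, F z⟫) = fun k => ⟪F z, z - w k⟫ := by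
          funext k
          rw [inner_sub_right, real_inner_comm (w k) (F z)]
        have h3 : ⟪F z, z⟫ - ⟪xh, F z⟫ = ⟪F z, z - xh⟫ := by
          rw [inner_sub_right, real_inner_comm xh (F z)]
        rw [h2, h3] at h1
        exact h1
      have hbnd0 : Tendsto (fun k => -((L + 1 / b) * ‖x k - w k‖ * (‖z‖ + R + ‖x k - w k‖)))
          atTop (nhds 0) := by
        have h1 := (hxw0.const_mul (L + 1 / b)).mul
          ((tendsto_const_nhds (x := ‖z‖ + R)).add hxw0)
        have h2 : (fun k => (L + 1 / b) * ‖x k - w k‖ * ((‖z‖ + R) + ‖x k - w k‖))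
            = fun k => (L + 1 / b) * ‖x k - w k‖ * (‖z‖ + R + ‖x k - w k‖) := rfl
        rw [h2] at h1
        simpa using h1.neg
      exact le_of_tendsto_of_tendsto' (hbnd0.mono_left hV) htend hlow
    have hxhS : ∀ z ∈ C, 0 ≤ ⟪F xh, z - xh⟫ := by
      intro z hz
      have hseq : ∀ n : ℕ, -(L * ‖z - xh‖ ^ 2 * (1 / (n + 1 : ℝ))) ≤ ⟪F xh, z - xh⟫ := by
        intro n
        set t : ℝ := 1 / (n + 1 : ℝ) with ht
        have ht0 : 0 < t := by positivity
        have ht1 : t ≤ 1 := by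
          rw [ht, div_le_one (by positivity)]
          have : (0 : ℝ) ≤ n := Nat.cast_nonneg n
          linarith
        have hzt : xh + t • (z - xh) ∈ C := by
          have hcomb := hCcv hxhC hz (by linarith : (0:ℝ) ≤ 1 - t) ht0.le (by ring)
          have heq : xh + t • (z - xh) = (1 - t) • xh + t • z := by
            rw [smul_sub, sub_smul, one_smul]
            abel
          rwa [heq]
        have h1 := hMinty _ hzt
        have h2 : (xh + t • (z - xh)) - xh = t • (z - xh) := by abel
        rw [h2, real_inner_smul_right] at h1
        have h3 : 0 ≤ ⟪F (xh + t • (z - xh)), z - xh⟫ := by nlinarith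
        have h4 : |⟪F (xh + t • (z - xh)) - F xh, z - xh⟫|
            ≤ (L * (t * ‖z - xh‖)) * ‖z - xh‖ := by
          calc |⟪F (xh + t • (z - xh)) - F xh, z - xh⟫|
              ≤ ‖F (xh + t • (z - xh)) - F xh‖ * ‖z - xh‖ := abs_real_inner_le_norm _ _
            _ ≤ (L * ‖(xh + t • (z - xh)) - xh‖) * ‖z - xh‖ :=
                mul_le_mul_of_nonneg_right (hLip _ _) (norm_nonneg _)
            _ = (L * (t * ‖z - xh‖)) * ‖z - xh‖ := by
                rw [h2, norm_smul, Real.norm_eq_abs, abs_of_pos ht0]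
        have h4' := (abs_le.1 h4).2
        have h5 : ⟪F xh, z - xh⟫ = ⟪F (xh + t • (z - xh)), z - xh⟫
            - ⟪F (xh + t • (z - xh)) - F xh, z - xh⟫ := by
          rw [inner_sub_left]
          ring
        nlinarith
      have hlim0 : Tendsto (fun n : ℕ => -(L * ‖z - xh‖ ^ 2 * (1 / (n + 1 : ℝ))))
          atTop (nhds 0) := by
        have h6 := tendsto_one_div_add_atTop_nhds_zero_nat.const_mul (L * ‖z - xh‖ ^ 2)
        simpa using h6.neg
      exact le_of_tendsto_of_tendsto' hlim0 tendsto_const_nhds hseq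
    exact ⟨xh, ⟨hxhC, hxhS⟩, hxh⟩
  -- final assembly
  obtain ⟨V0, hV0⟩ := Ultrafilter.exists_le (atTop : Filter ℕ)
  obtain ⟨xh, hxhP, hxhT⟩ := hUlt V0 hV0
  refine ⟨xh, hxhP, fun u => ?_⟩
  by_contra hcon
  rw [Metric.tendsto_atTop] at hcon
  push_neg at hcon
  obtain ⟨ε, hε, hfreq⟩ := hcon
  have hfr : ∃ᶠ k in atTop, ε ≤ dist ⟪x k, u⟫ ⟪xh, u⟫ := by
    rw [Filter.frequently_atTop]
    intro a
    obtain ⟨n, hn, hdd⟩ := hfreq a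
    exact ⟨n, hn, hdd⟩
  have hNB : (atTop ⊓ Filter.principal {k | ε ≤ dist ⟪x k, u⟫ ⟪xh, u⟫}).NeBot :=
    Filter.frequently_iff_neBot.1 hfr
  haveI := hNB
  set V1 : Ultrafilter ℕ :=
    Ultrafilter.of (atTop ⊓ Filter.principal {k | ε ≤ dist ⟪x k, u⟫ ⟪xh, u⟫}) with hV1def
  have hV1le : (V1 : Filter ℕ) ≤ atTop ⊓ Filter.principal {k | ε ≤ dist ⟪x k, u⟫ ⟪xh, u⟫} :=
    Ultrafilter.of_le _
  have hV1at : (V1 : Filter ℕ) ≤ atTop := hV1le.trans inf_le_left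
  have hSmem : {k | ε ≤ dist ⟪x k, u⟫ ⟪xh, u⟫} ∈ (V1 : Filter ℕ) :=
    hV1le.trans inf_le_right (Filter.mem_principal_self _)
  obtain ⟨yh, hyhP, hyhT⟩ := hUlt V1 hV1at
  obtain ⟨la, hla⟩ := hlim xh hxhP.1 hxhP.2
  obtain ⟨lb, hlb⟩ := hlim yh hyhP.1 hyhP.2
  have hgt : Tendsto (fun k => ⟪x k, xh - yh⟫) atTop
      (nhds ((‖xh‖ ^ 2 - ‖yh‖ ^ 2 - (la ^ 2 - lb ^ 2)) / 2)) := by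
    have h1 : Tendsto (fun k => ‖x k - xh‖ ^ 2 - ‖x k - yh‖ ^ 2) atTop
        (nhds (la ^ 2 - lb ^ 2)) := (hla.pow 2).sub (hlb.pow 2)
    have h3 : ∀ k, ⟪x k, xh - yh⟫
        = (‖xh‖ ^ 2 - ‖yh‖ ^ 2 - (‖x k - xh‖ ^ 2 - ‖x k - yh‖ ^ 2)) / 2 := by
      intro k
      have h2 : ‖x k - xh‖ ^ 2 - ‖x k - yh‖ ^ 2
          = -2 * ⟪x k, xh - yh⟫ + (‖xh‖ ^ 2 - ‖yh‖ ^ 2) := by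
        rw [norm_sub_sq_real, norm_sub_sq_real, inner_sub_right]
        ring
      linarith
    have h4 := ((tendsto_const_nhds (x := ‖xh‖ ^ 2 - ‖yh‖ ^ 2)
      (f := (atTop : Filter ℕ))).sub h1).div_const 2
    exact h4.congr (fun k => (h3 k).symm)
  have hc1 : ⟪xh, xh - yh⟫ = (‖xh‖ ^ 2 - ‖yh‖ ^ 2 - (la ^ 2 - lb ^ 2)) / 2 :=
    tendsto_nhds_unique (hxhT (xh - yh)) (hgt.mono_left hV0)
  have hc2 : ⟪yh, xh - yh⟫ = (‖xh‖ ^ 2 - ‖yh‖ ^ 2 - (la ^ 2 - lb ^ 2)) / 2 :=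
    tendsto_nhds_unique (hyhT (xh - yh)) (hgt.mono_left hV1at)
  have hxy : xh = yh := by
    have h5 : ⟪xh - yh, xh - yh⟫ = (0 : ℝ) := by
      rw [inner_sub_left, hc1, hc2]
      ring
    have h6 : xh - yh = 0 := inner_self_eq_zero.1 h5
    exact sub_eq_zero.1 h6
  have hT := hyhT u
  rw [← hxy] at hT
  have hEv : ∀ᶠ k in (V1 : Filter ℕ), dist ⟪x k, u⟫ ⟪xh, u⟫ < ε :=
    Metric.tendsto_nhds.1 hT ε hε
  have hEv2 : ∀ᶠ k in (V1 : Filter ℕ), ε ≤ dist ⟪x k, u⟫ ⟪xh, u⟫ := hSmem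
  obtain ⟨k, hk1, hk2⟩ := (hEv.and hEv2).exists
  linarith
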